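/- The Epstein zeta value Σ over all nonzero integer pairs (c,d) of 1/(c² + cd + d²)^6 is at most 6.0099. -/

import Mathlib

set_option maxHeartbeats 1000000

open Set Real

namespace EpsteinAux

noncomputable def F (p : ℤ × ℤ) : ℝ :=
  (1 : ℝ) / ((p.1 : ℝ) ^ 2 + (p.1 : ℝ) * (p.2 : ℝ) + (p.2 : ℝ) ^ 2) ^ 6

noncomputable def Q (p : ℤ × ℤ) : ℝ :=
  (p.1 : ℝ) ^ 2 + (p.1 : ℝ) * (p.2 : ℝ) + (p.2 : ℝ) ^ 2

lemma F_eq (p : ℤ × ℤ) : F p = 1 / (Q p) ^ 6 := rfl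

lemma F_nonneg (p : ℤ × ℤ) : 0 ≤ F p := by
  rw [F_eq]; positivity

lemma F_zero : F 0 = 0 := by simp [F]

lemma Q_ge_c (p : ℤ × ℤ) : 3 / 4 * (p.1 : ℝ) ^ 2 ≤ Q p := by
  have := sq_nonneg ((p.1 : ℝ) + 2 * (p.2 : ℝ))
  unfold Q; nlinarith

lemma Q_ge_d (p : ℤ × ℤ) : 3 / 4 * (p.2 : ℝ) ^ 2 ≤ Q p := by
  have := sq_nonneg (2 * (p.1 : ℝ) + (p.2 : ℝ))
  unfold Q; nlinarith

lemma one_le_Q {p : ℤ × ℤ} (hp : p ≠ 0) : 1 ≤ Q p := by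
  have key : 1 ≤ p.1 ^ 2 + p.1 * p.2 + p.2 ^ 2 := by
    rcases eq_or_ne p.2 0 with h2 | h2
    · have h1 : p.1 ≠ 0 := by
        intro h1; exact hp (Prod.ext h1 h2)
      have h1' : 1 ≤ p.1 ^ 2 := by
        rcases h1.lt_or_gt with h | h <;> nlinarith
      nlinarith [sq_nonneg p.2]
    · have hd : 1 ≤ p.2 ^ 2 := by
        rcases h2.lt_or_gt with h | h <;> nlinarith
      have h4 : 3 ≤ 4 * (p.1 ^ 2 + p.1 * p.2 + p.2 ^ 2) := by
        nlinarith [sq_nonneg (2 * p.1 + p.2)]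
      omega
  have h' : ((1 : ℤ) : ℝ) ≤ ((p.1 ^ 2 + p.1 * p.2 + p.2 ^ 2 : ℤ) : ℝ) := by
    exact_mod_cast key
  push_cast at h'
  unfold Q; linarith

lemma F_le_of {p : ℤ × ℤ} {M1 M2 : ℝ} (h1 : 0 < M1) (h2 : 0 < M2)
    (h : 729 / 4096 * (M1 * M2) ≤ (Q p) ^ 6) :
    F p ≤ 4096 / 729 * (1 / M1 * (1 / M2)) := by
  have hA : (0 : ℝ) < 729 / 4096 * (M1 * M2) := by positivity
  rw [F_eq]
  calc 1 / (Q p) ^ 6 ≤ 1 / (729 / 4096 * (M1 * M2)) :=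
        one_div_le_one_div_of_le hA h
    _ = 4096 / 729 * (1 / M1 * (1 / M2)) := by
        field_simp

noncomputable def h (k : ℕ) (n : ℤ) : ℝ := 1 / max 1 ((n : ℝ) ^ k)

lemma max_pos (k : ℕ) (n : ℤ) : (0:ℝ) < max 1 ((n : ℝ) ^ k) :=
  lt_of_lt_of_le zero_lt_one (le_max_left _ _)

lemma h_nonneg (k : ℕ) (n : ℤ) : 0 ≤ h k n :=
  le_of_lt (by unfold h; exact div_pos one_pos (max_pos k n))

lemma max_eq_pow {k : ℕ} (hk : Even k) {n : ℤ} (hn : n ≠ 0) :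
    max 1 ((n : ℝ) ^ k) = (n : ℝ) ^ k := by
  apply max_eq_right
  have h1 : (1 : ℝ) ≤ |(n : ℝ)| := by
    rw [← Int.cast_abs]
    exact_mod_cast Int.one_le_abs hn
  calc (1:ℝ) ≤ |(n : ℝ)| ^ k := one_le_pow₀ h1
    _ = (n : ℝ) ^ k := hk.pow_abs _

lemma summable_h {k : ℕ} (hk1 : 1 < k) (hk : Even k) : Summable (h k) := by
  have s1 : Summable fun n : ℤ => 1 / (n : ℝ) ^ k :=
    summable_one_div_int_pow.mpr hk1
  have s2 : Summable fun n : ℤ => if n = 0 then (1 : ℝ) else 0 := by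
    apply summable_of_ne_finset_zero (s := {(0 : ℤ)})
    intro n hn
    simp only [Finset.mem_singleton] at hn
    simp [hn]
  apply (s1.add s2).congr
  intro n
  rcases eq_or_ne n 0 with rfl | hn
  · simp [h, zero_pow (by omega : k ≠ 0)]
  · simp only [hn, if_false, add_zero, h, max_eq_pow hk hn]

lemma summable_h2 : Summable (h 2) := summable_h one_lt_two even_two
lemma summable_h6 : Summable (h 6) := summable_h (by norm_num) (by decide)

lemma tsum_nat_h2_eq : ∑' n : ℕ, h 2 (n : ℤ) = 1 + π ^ 2 / 6 := by
  have s1 : Summable fun n : ℕ => 1 / (n : ℝ) ^ 2 := summable_one_div_nat_pow.mpr one_lt_two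
  have s2 : Summable fun n : ℕ => if n = 0 then (1 : ℝ) else 0 := by
    apply summable_of_ne_finset_zero (s := {(0 : ℕ)})
    intro n hn
    simp only [Finset.mem_singleton] at hn
    simp [hn]
  have key : ∀ n : ℕ, h 2 (n : ℤ) = (if n = 0 then (1:ℝ) else 0) + 1 / (n : ℝ) ^ 2 := by
    intro n
    rcases eq_or_ne n 0 with rfl | hn
    · simp [h]
    · have hn' : (n : ℤ) ≠ 0 := by exact_mod_cast hn
      have hme := max_eq_pow even_two hn'
      simp only [Int.cast_natCast] at hme
      simp [h, hn, hme]
  rw [tsum_congr key, Summable.tsum_add s2 s1, tsum_ite_eq 0 (fun _ => (1:ℝ)), hasSum_zeta_two.tsum_eq]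

lemma tsum_neg_h2_eq : ∑' n : ℕ, h 2 (-((n : ℤ) + 1)) = π ^ 2 / 6 := by
  have hz : Summable fun n : ℕ => 1 / (n : ℝ) ^ 2 := summable_one_div_nat_pow.mpr one_lt_two
  have key : ∀ n : ℕ, h 2 (-((n : ℤ) + 1)) = 1 / ((n + 1 : ℕ) : ℝ) ^ 2 := by
    intro n
    have hn : (-((n : ℤ) + 1)) ≠ 0 := by omega
    rw [h, max_eq_pow even_two hn]
    push_cast
    ring_nf
  rw [tsum_congr key]
  have h2 := Summable.sum_add_tsum_nat_add (f := fun n : ℕ => 1 / (n : ℝ) ^ 2) 1 hz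
  rw [hasSum_zeta_two.tsum_eq] at h2
  simpa using h2

lemma summable_h2_nat : Summable fun n : ℕ => h 2 (n : ℤ) :=
  summable_h2.comp_injective (fun a b hab => by exact_mod_cast hab)

lemma summable_h2_neg : Summable fun n : ℕ => h 2 (-((n : ℤ) + 1)) :=
  summable_h2.comp_injective (fun a b hab => by omega)

lemma tsum_h2_le : ∑' n : ℤ, h 2 n ≤ 4.3075 := by
  rw [tsum_of_nat_of_neg_add_one summable_h2_nat summable_h2_neg,
    tsum_nat_h2_eq, tsum_neg_h2_eq]
  nlinarith [pi_lt_d2, pi_gt_three]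

lemma tsum_h2_nonneg : 0 ≤ ∑' n : ℤ, h 2 n := tsum_nonneg (h_nonneg 2)

/-! ## The tail weight `v` -/

noncomputable def v (c : ℤ) : ℝ :=
  ({c : ℤ | 5 ≤ |c|}).indicator (fun c => 1 / (c : ℝ) ^ 10) c

lemma v_nonneg (c : ℤ) : 0 ≤ v c := by
  apply Set.indicator_nonneg
  intro c _
  positivity

lemma v_of_mem {c : ℤ} (hc : 5 ≤ |c|) : v c = 1 / (c : ℝ) ^ 10 :=
  Set.indicator_of_mem (show c ∈ {c : ℤ | 5 ≤ |c|} from hc) _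

lemma v_of_not_mem {c : ℤ} (hc : ¬ 5 ≤ |c|) : v c = 0 :=
  Set.indicator_of_notMem (show c ∉ {c : ℤ | 5 ≤ |c|} from hc) _

lemma summable_v : Summable v :=
  ((summable_one_div_int_pow (p := 10)).mpr (by norm_num)).indicator _

lemma shifted_summable (k : ℕ) (hk : 1 < k) :
    Summable fun n : ℕ => 1 / ((n : ℝ) + 5) ^ k := by
  have hs : Summable fun n : ℕ => 1 / ((n + 5 : ℕ) : ℝ) ^ k :=
    (_root_.summable_nat_add_iff 5).mpr (summable_one_div_nat_pow.mpr hk)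
  apply hs.congr
  intro n
  push_cast
  ring_nf

lemma Z2_le : ∑' n : ℕ, 1 / ((n : ℝ) + 5) ^ 2 ≤ 0.2302 := by
  have hz : Summable fun n : ℕ => 1 / (n : ℝ) ^ 2 := summable_one_div_nat_pow.mpr one_lt_two
  have key := Summable.sum_add_tsum_nat_add (f := fun n : ℕ => 1 / (n : ℝ) ^ 2) 5 hz
  rw [hasSum_zeta_two.tsum_eq] at key
  have hsum : ∑ i ∈ Finset.range 5, 1 / (i : ℝ) ^ 2 = 205 / 144 := by
    rw [Finset.sum_range_succ, Finset.sum_range_succ, Finset.sum_range_succ,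
      Finset.sum_range_succ, Finset.sum_range_one]
    norm_num
  rw [hsum] at key
  have heq : ∑' n : ℕ, 1 / ((n : ℝ) + 5) ^ 2 = ∑' n : ℕ, 1 / ((n + 5 : ℕ) : ℝ) ^ 2 := by
    apply tsum_congr; intro n; push_cast; ring_nf
  rw [heq]
  nlinarith [pi_lt_d2, pi_gt_three]

lemma Z10_le : ∑' n : ℕ, 1 / ((n : ℝ) + 5) ^ 10 ≤ 0.2302 / 390625 := by
  have hle : ∑' n : ℕ, 1 / ((n : ℝ) + 5) ^ 10
      ≤ ∑' n : ℕ, (1 / 390625 : ℝ) * (1 / ((n : ℝ) + 5) ^ 2) := by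
    apply Summable.tsum_le_tsum _ (shifted_summable 10 (by norm_num))
      ((shifted_summable 2 one_lt_two).mul_left _)
    intro n
    have hx : (5 : ℝ) ≤ (n : ℝ) + 5 := by
      have := Nat.cast_nonneg (α := ℝ) n
      linarith
    have hx0 : (0 : ℝ) < (n : ℝ) + 5 := by positivity
    have hmul : (1 / 390625 : ℝ) * (1 / ((n : ℝ) + 5) ^ 2)
        = 1 / (390625 * ((n : ℝ) + 5) ^ 2) := by
      rw [one_div_mul_one_div]
    rw [hmul]
    apply one_div_le_one_div_of_le (by positivity)
    have h58 : (390625 : ℝ) ≤ ((n : ℝ) + 5) ^ 8 := by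
      calc (390625 : ℝ) = 5 ^ 8 := by norm_num
        _ ≤ ((n : ℝ) + 5) ^ 8 := pow_le_pow_left₀ (by norm_num) hx 8
    calc (390625:ℝ) * ((n:ℝ)+5) ^ 2 ≤ ((n:ℝ)+5) ^ 8 * ((n:ℝ)+5) ^ 2 :=
          mul_le_mul_of_nonneg_right h58 (by positivity)
      _ = ((n:ℝ)+5) ^ 10 := by ring
  calc ∑' n : ℕ, 1 / ((n : ℝ) + 5) ^ 10
      ≤ ∑' n : ℕ, (1 / 390625 : ℝ) * (1 / ((n : ℝ) + 5) ^ 2) := hle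
    _ = (1 / 390625 : ℝ) * ∑' n : ℕ, 1 / ((n : ℝ) + 5) ^ 2 := by
        rw [tsum_mul_left]
    _ ≤ (1 / 390625 : ℝ) * 0.2302 := by
        apply mul_le_mul_of_nonneg_left Z2_le (by norm_num)
    _ = 0.2302 / 390625 := by ring

lemma summable_v_nat : Summable fun n : ℕ => v (n : ℤ) :=
  summable_v.comp_injective (fun a b hab => by exact_mod_cast hab)

lemma summable_v_neg : Summable fun n : ℕ => v (-((n : ℤ) + 1)) :=
  summable_v.comp_injective (fun a b hab => by omega)

lemma tsum_v_le : ∑' c : ℤ, v c ≤ 0.0000012 := by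
  rw [tsum_of_nat_of_neg_add_one summable_v_nat summable_v_neg]
  have hnat : ∑' n : ℕ, v (n : ℤ) = ∑' n : ℕ, 1 / ((n : ℝ) + 5) ^ 10 := by
    have key := Summable.sum_add_tsum_nat_add (f := fun n : ℕ => v (n : ℤ)) 5 summable_v_nat
    have hzero : ∑ i ∈ Finset.range 5, v (i : ℤ) = 0 := by
      apply Finset.sum_eq_zero
      intro i hi
      simp only [Finset.mem_range] at hi
      apply v_of_not_mem
      have habs : |(i : ℤ)| = (i : ℤ) := abs_of_nonneg (by positivity)
      omega
    rw [hzero, zero_add] at key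
    rw [← key]
    apply tsum_congr
    intro n
    show v ((n + 5 : ℕ) : ℤ) = 1 / ((n : ℝ) + 5) ^ 10
    rw [show ((n + 5 : ℕ) : ℤ) = (n : ℤ) + 5 by push_cast; ring]
    have hm : (5 : ℤ) ≤ |(n : ℤ) + 5| := by
      have habs : |(n : ℤ) + 5| = (n : ℤ) + 5 := abs_of_nonneg (by positivity)
      omega
    rw [v_of_mem hm]
    push_cast
    ring_nf
  have hneg : ∑' n : ℕ, v (-((n : ℤ) + 1)) = ∑' n : ℕ, 1 / ((n : ℝ) + 5) ^ 10 := by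
    have key := Summable.sum_add_tsum_nat_add (f := fun n : ℕ => v (-((n : ℤ) + 1))) 4 summable_v_neg
    have hzero : ∑ i ∈ Finset.range 4, v (-((i : ℤ) + 1)) = 0 := by
      apply Finset.sum_eq_zero
      intro i hi
      simp only [Finset.mem_range] at hi
      apply v_of_not_mem
      have habs : |(-((i : ℤ) + 1))| = (i : ℤ) + 1 := by
        rw [abs_neg, abs_of_nonneg (by positivity)]
      omega
    rw [hzero, zero_add] at key
    rw [← key]
    apply tsum_congr
    intro n
    show v (-(((n + 4 : ℕ) : ℤ) + 1)) = 1 / ((n : ℝ) + 5) ^ 10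
    rw [show (-(((n + 4 : ℕ) : ℤ) + 1)) = -((n : ℤ) + 5) by push_cast; ring]
    have hm : (5 : ℤ) ≤ |(-((n : ℤ) + 5))| := by
      rw [abs_neg, abs_of_nonneg (by positivity)]
      omega
    rw [v_of_mem hm]
    have : ((-((n : ℤ) + 5) : ℤ) : ℝ) = -((n : ℝ) + 5) := by push_cast; ring
    rw [this, show (-((n:ℝ)+5)) ^ 10 = ((n:ℝ)+5) ^ 10 by ring]
  rw [hnat, hneg]
  have := Z10_le
  nlinarith

/-! ## Summability of F -/

lemma F_le_global (p : ℤ × ℤ) :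
    F p ≤ 4096 / 729 * (h 6 p.1 * h 6 p.2) := by
  rcases eq_or_ne p 0 with rfl | hp
  · rw [F_zero]
    exact mul_nonneg (by norm_num) (mul_nonneg (h_nonneg 6 _) (h_nonneg 6 _))
  · have hQ1 := one_le_Q hp
    have hQ0 : 0 ≤ Q p := le_trans zero_le_one hQ1
    have hcube : ∀ n : ℤ, 3 / 4 * (n : ℝ) ^ 2 ≤ Q p →
        27 / 64 * max 1 ((n : ℝ) ^ 6) ≤ (Q p) ^ 3 := by
      intro n hn
      have e1 : (27 / 64 : ℝ) * max 1 ((n : ℝ) ^ 6)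
          = max (27 / 64) (27 / 64 * (n : ℝ) ^ 6) := by
        rw [mul_max_of_nonneg _ _ (by norm_num : (0:ℝ) ≤ 27/64), mul_one]
      rw [e1]
      apply max_le
      · calc (27 / 64 : ℝ) ≤ 1 := by norm_num
          _ ≤ (Q p) ^ 3 := one_le_pow₀ hQ1
      · calc (27 / 64 : ℝ) * (n : ℝ) ^ 6 = (3 / 4 * (n : ℝ) ^ 2) ^ 3 := by ring
          _ ≤ (Q p) ^ 3 := pow_le_pow_left₀ (by positivity) hn 3
    have hc := hcube p.1 (Q_ge_c p)
    have hd := hcube p.2 (Q_ge_d p)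
    have hkey : 729 / 4096 * (max 1 ((p.1 : ℝ) ^ 6) * max 1 ((p.2 : ℝ) ^ 6)) ≤ (Q p) ^ 6 := by
      have := mul_le_mul hc hd (by positivity) (by positivity)
      calc 729 / 4096 * (max 1 ((p.1 : ℝ) ^ 6) * max 1 ((p.2 : ℝ) ^ 6))
          = (27 / 64 * max 1 ((p.1 : ℝ) ^ 6)) * (27 / 64 * max 1 ((p.2 : ℝ) ^ 6)) := by ring
        _ ≤ (Q p) ^ 3 * (Q p) ^ 3 := this
        _ = (Q p) ^ 6 := by ring
    exact F_le_of (max_pos 6 p.1) (max_pos 6 p.2) hkey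

lemma summable_F : Summable F := by
  apply Summable.of_nonneg_of_le F_nonneg F_le_global
  exact ((summable_h6.mul_of_nonneg summable_h6 (h_nonneg 6) (h_nonneg 6))).mul_left _

/-! ## Tail bounds -/

lemma F_le_tail1 {p : ℤ × ℤ} (hc : 5 ≤ |p.1|) :
    F p ≤ 4096 / 729 * (v p.1 * h 2 p.2) := by
  have hc2 : (25 : ℝ) ≤ (p.1 : ℝ) ^ 2 := by
    have : (5:ℝ) ≤ |(p.1 : ℝ)| := by
      rw [← Int.cast_abs]; exact_mod_cast hc
    calc (25:ℝ) = 5 ^ 2 := by norm_num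
      _ ≤ |(p.1 : ℝ)| ^ 2 := pow_le_pow_left₀ (by norm_num) this 2
      _ = (p.1 : ℝ) ^ 2 := sq_abs _
  have hQc := Q_ge_c p
  have hQd := Q_ge_d p
  have hQ1 : (1 : ℝ) ≤ Q p := by nlinarith
  have hQ0 : (0 : ℝ) ≤ Q p := by linarith
  have h5 : (3 / 4 : ℝ) ^ 5 * (p.1 : ℝ) ^ 10 ≤ (Q p) ^ 5 := by
    calc (3 / 4 : ℝ) ^ 5 * (p.1 : ℝ) ^ 10 = (3 / 4 * (p.1 : ℝ) ^ 2) ^ 5 := by ring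
      _ ≤ (Q p) ^ 5 := pow_le_pow_left₀ (by positivity) hQc 5
  have h1 : (3 / 4 : ℝ) * max 1 ((p.2 : ℝ) ^ 2) ≤ Q p := by
    rw [mul_max_of_nonneg _ _ (by norm_num : (0:ℝ) ≤ 3/4), mul_one]
    apply max_le (by linarith) hQd
  have hkey : 729 / 4096 * ((p.1 : ℝ) ^ 10 * max 1 ((p.2 : ℝ) ^ 2)) ≤ (Q p) ^ 6 := by
    have hmul := mul_le_mul h5 h1 (by positivity) (by positivity)
    calc 729 / 4096 * ((p.1 : ℝ) ^ 10 * max 1 ((p.2 : ℝ) ^ 2))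
        = ((3 / 4 : ℝ) ^ 5 * (p.1 : ℝ) ^ 10) * (3 / 4 * max 1 ((p.2 : ℝ) ^ 2)) := by ring
      _ ≤ (Q p) ^ 5 * Q p := hmul
      _ = (Q p) ^ 6 := by ring
  have hM1 : (0:ℝ) < (p.1 : ℝ) ^ 10 := by
    have h2' : (0:ℝ) < (p.1 : ℝ) ^ 2 := by linarith
    calc (0:ℝ) < ((p.1 : ℝ) ^ 2) ^ 5 := pow_pos h2' 5
      _ = (p.1 : ℝ) ^ 10 := by ring
  have := F_le_of hM1 (max_pos 2 p.2) hkey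
  rwa [← v_of_mem hc] at this

noncomputable def G1 : ℤ × ℤ → ℝ := fun p => 4096 / 729 * (v p.1 * h 2 p.2)

lemma summable_G1 : Summable G1 :=
  ((summable_v.mul_of_nonneg summable_h2 v_nonneg (h_nonneg 2))).mul_left _

lemma tsum_G1_le : ∑' p : ℤ × ℤ, G1 p ≤ 0.0000291 := by
  have e1 : ∑' p : ℤ × ℤ, G1 p = 4096 / 729 * ∑' p : ℤ × ℤ, v p.1 * h 2 p.2 :=
    (summable_v.mul_of_nonneg summable_h2 v_nonneg (h_nonneg 2)).tsum_mul_left (4096 / 729)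
  have e2 : ∑' p : ℤ × ℤ, v p.1 * h 2 p.2 = (∑' c : ℤ, v c) * ∑' d : ℤ, h 2 d :=
    (Summable.tsum_mul_tsum summable_v summable_h2
      (summable_v.mul_of_nonneg summable_h2 v_nonneg (h_nonneg 2))).symm
  rw [e1, e2]
  have hv := tsum_v_le
  have hh := tsum_h2_le
  have hv0 : 0 ≤ ∑' c : ℤ, v c := tsum_nonneg v_nonneg
  have hh0 : 0 ≤ ∑' d : ℤ, h 2 d := tsum_h2_nonneg
  nlinarith

lemma F_le_tail2 {p : ℤ × ℤ} (hd : 5 ≤ |p.2|) :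
    F p ≤ 4096 / 729 * (h 2 p.1 * v p.2) := by
  have hd2 : (25 : ℝ) ≤ (p.2 : ℝ) ^ 2 := by
    have : (5:ℝ) ≤ |(p.2 : ℝ)| := by
      rw [← Int.cast_abs]; exact_mod_cast hd
    calc (25:ℝ) = 5 ^ 2 := by norm_num
      _ ≤ |(p.2 : ℝ)| ^ 2 := pow_le_pow_left₀ (by norm_num) this 2
      _ = (p.2 : ℝ) ^ 2 := sq_abs _
  have hQc := Q_ge_c p
  have hQd := Q_ge_d p
  have hQ1 : (1 : ℝ) ≤ Q p := by nlinarith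
  have h5 : (3 / 4 : ℝ) ^ 5 * (p.2 : ℝ) ^ 10 ≤ (Q p) ^ 5 := by
    calc (3 / 4 : ℝ) ^ 5 * (p.2 : ℝ) ^ 10 = (3 / 4 * (p.2 : ℝ) ^ 2) ^ 5 := by ring
      _ ≤ (Q p) ^ 5 := pow_le_pow_left₀ (by positivity) hQd 5
  have h1 : (3 / 4 : ℝ) * max 1 ((p.1 : ℝ) ^ 2) ≤ Q p := by
    rw [mul_max_of_nonneg _ _ (by norm_num : (0:ℝ) ≤ 3/4), mul_one]
    apply max_le (by linarith) hQc
  have hkey : 729 / 4096 * (max 1 ((p.1 : ℝ) ^ 2) * (p.2 : ℝ) ^ 10) ≤ (Q p) ^ 6 := by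
    have hmul := mul_le_mul h5 h1 (by positivity) (by positivity)
    calc 729 / 4096 * (max 1 ((p.1 : ℝ) ^ 2) * (p.2 : ℝ) ^ 10)
        = ((3 / 4 : ℝ) ^ 5 * (p.2 : ℝ) ^ 10) * (3 / 4 * max 1 ((p.1 : ℝ) ^ 2)) := by ring
      _ ≤ (Q p) ^ 5 * Q p := hmul
      _ = (Q p) ^ 6 := by ring
  have hM2 : (0:ℝ) < (p.2 : ℝ) ^ 10 := by
    have h2' : (0:ℝ) < (p.2 : ℝ) ^ 2 := by linarith
    calc (0:ℝ) < ((p.2 : ℝ) ^ 2) ^ 5 := pow_pos h2' 5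
      _ = (p.2 : ℝ) ^ 10 := by ring
  have := F_le_of (max_pos 2 p.1) hM2 hkey
  rwa [← v_of_mem hd] at this

noncomputable def G2 : ℤ × ℤ → ℝ := fun p => 4096 / 729 * (h 2 p.1 * v p.2)

lemma summable_G2 : Summable G2 :=
  ((summable_h2.mul_of_nonneg summable_v (h_nonneg 2) v_nonneg)).mul_left _

lemma tsum_G2_le : ∑' p : ℤ × ℤ, G2 p ≤ 0.0000291 := by
  have e1 : ∑' p : ℤ × ℤ, G2 p = 4096 / 729 * ∑' p : ℤ × ℤ, h 2 p.1 * v p.2 :=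
    (summable_h2.mul_of_nonneg summable_v (h_nonneg 2) v_nonneg).tsum_mul_left (4096 / 729)
  have e2 : ∑' p : ℤ × ℤ, h 2 p.1 * v p.2 = (∑' c : ℤ, h 2 c) * ∑' d : ℤ, v d :=
    (Summable.tsum_mul_tsum summable_h2 summable_v
      (summable_h2.mul_of_nonneg summable_v (h_nonneg 2) v_nonneg)).symm
  rw [e1, e2]
  have hv := tsum_v_le
  have hh := tsum_h2_le
  have hv0 : 0 ≤ ∑' d : ℤ, v d := tsum_nonneg v_nonneg
  have hh0 : 0 ≤ ∑' c : ℤ, h 2 c := tsum_h2_nonneg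
  nlinarith

/-! ## The box -/

def boxline : Finset ℤ := {-4, -3, -2, -1, 0, 1, 2, 3, 4}

def Box : Finset (ℤ × ℤ) := boxline ×ˢ boxline

lemma not_mem_box {p : ℤ × ℤ} (hp : p ∉ Box) : 5 ≤ |p.1| ∨ 5 ≤ |p.2| := by
  rw [Box, Finset.mem_product] at hp
  simp only [boxline, Finset.mem_insert, Finset.mem_singleton] at hp
  rcases abs_cases p.1 with ⟨ha1, ha2⟩ | ⟨ha1, ha2⟩ <;>
    rcases abs_cases p.2 with ⟨hb1, hb2⟩ | ⟨hb1, hb2⟩ <;> omega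

set_option maxHeartbeats 2000000 in
lemma box_sum_le : ∑ p ∈ Box, F p ≤ 6.009814 := by
  rw [Box, Finset.sum_product]
  simp only [boxline, F]
  rw [show ((6.009814 : ℝ)) = 6.009814 from rfl]
  norm_num [Finset.sum_insert, Finset.mem_insert, Finset.mem_singleton]

/-! ## Main theorem pieces -/

noncomputable def A1 : Set (ℤ × ℤ) := {p | 5 ≤ |p.1|}
noncomputable def A2 : Set (ℤ × ℤ) := {p | 5 ≤ |p.2|}

lemma tail_le :
    ∑' p : ((Box : Set (ℤ × ℤ))ᶜ : Set (ℤ × ℤ)), F p ≤ 0.0000582 := by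
  rw [tsum_subtype]
  have hle1 : ∀ p : ℤ × ℤ,
      ((Box : Set (ℤ × ℤ))ᶜ).indicator F p ≤ A1.indicator F p + A2.indicator F p := by
    intro p
    rcases eq_or_ne (((Box : Set (ℤ × ℤ))ᶜ).indicator F p) 0 with h0 | h0
    · rw [h0]
      have := Set.indicator_nonneg (fun q _ => F_nonneg q) (s := A1) p
      have := Set.indicator_nonneg (fun q _ => F_nonneg q) (s := A2) p
      linarith
    · have hmem : p ∈ ((Box : Set (ℤ × ℤ))ᶜ) := by
        by_contra hc
        exact h0 (Set.indicator_of_notMem hc F)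
      rw [Set.indicator_of_mem hmem]
      have hBox : p ∉ Box := by
        simpa using hmem
      rcases not_mem_box hBox with hc | hc
      · have h1 : A1.indicator F p = F p := Set.indicator_of_mem (show p ∈ A1 from hc) F
        have h2 : 0 ≤ A2.indicator F p :=
          Set.indicator_nonneg (fun q _ => F_nonneg q) p
        linarith
      · have h1 : A2.indicator F p = F p := Set.indicator_of_mem (show p ∈ A2 from hc) F
        have h2 : 0 ≤ A1.indicator F p :=
          Set.indicator_nonneg (fun q _ => F_nonneg q) p
        linarith
  have hs1 : Summable (A1.indicator F) := summable_F.indicator _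
  have hs2 : Summable (A2.indicator F) := summable_F.indicator _
  have hstep : ∑' p : ℤ × ℤ, ((Box : Set (ℤ × ℤ))ᶜ).indicator F p
      ≤ ∑' p : ℤ × ℤ, (A1.indicator F p + A2.indicator F p) :=
    Summable.tsum_le_tsum hle1 (summable_F.indicator _) (hs1.add hs2)
  have hsplit : ∑' p : ℤ × ℤ, (A1.indicator F p + A2.indicator F p)
      = (∑' p : ℤ × ℤ, A1.indicator F p) + ∑' p : ℤ × ℤ, A2.indicator F p :=
    Summable.tsum_add hs1 hs2
  have ht1 : ∑' p : ℤ × ℤ, A1.indicator F p ≤ 0.0000291 := by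
    refine le_trans (Summable.tsum_le_tsum ?_ hs1 summable_G1) tsum_G1_le
    intro p
    rcases Classical.em (p ∈ A1) with hm | hm
    · rw [Set.indicator_of_mem hm]
      exact F_le_tail1 hm
    · rw [Set.indicator_of_notMem hm]
      have h1 := v_nonneg p.1
      have h2 := h_nonneg 2 p.2
      unfold G1
      positivity
  have ht2 : ∑' p : ℤ × ℤ, A2.indicator F p ≤ 0.0000291 := by
    refine le_trans (Summable.tsum_le_tsum ?_ hs2 summable_G2) tsum_G2_le
    intro p
    rcases Classical.em (p ∈ A2) with hm | hm
    · rw [Set.indicator_of_mem hm]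
      exact F_le_tail2 hm
    · rw [Set.indicator_of_notMem hm]
      have h1 := h_nonneg 2 p.1
      have h2 := v_nonneg p.2
      unfold G2
      positivity
  linarith

end EpsteinAux

open EpsteinAux in
theorem epstein_zeta_six_bound :
    ∑' p : {p : ℤ × ℤ // p ≠ 0},
      (1 : ℝ) / ((p.1.1 : ℝ) ^ 2 + (p.1.1 : ℝ) * (p.1.2 : ℝ) + (p.1.2 : ℝ) ^ 2) ^ 6
      ≤ 6.0099 := by
  have hsub : ∑' p : {p : ℤ × ℤ // p ≠ 0},
      (1 : ℝ) / ((p.1.1 : ℝ) ^ 2 + (p.1.1 : ℝ) * (p.1.2 : ℝ) + (p.1.2 : ℝ) ^ 2) ^ 6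
      = ∑' p : ℤ × ℤ, F p := by
    have : ∑' p : {p : ℤ × ℤ // p ≠ 0},
        (1 : ℝ) / ((p.1.1 : ℝ) ^ 2 + (p.1.1 : ℝ) * (p.1.2 : ℝ) + (p.1.2 : ℝ) ^ 2) ^ 6
        = ∑' p : ({p : ℤ × ℤ | p ≠ 0} : Set (ℤ × ℤ)), F p := rfl
    rw [this]
    apply tsum_subtype_eq_of_support_subset
    intro p hp
    simp only [Function.mem_support] at hp
    intro h0
    exact hp (by rw [h0, F_zero])
  rw [hsub]
  have hcompl := Summable.tsum_add_tsum_compl (f := F) (s := (Box : Set (ℤ × ℤ)))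
    (summable_F.subtype _) (summable_F.subtype _)
  rw [Finset.tsum_subtype'] at hcompl
  have h1 := box_sum_le
  have h2 := tail_le
  linarith [hcompl]
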